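/- Let L ⊂ ℂ be a lattice (the ℤ-span of two elements linearly independent over ℝ) such that either conj(z)·w ∈ L for all z, w ∈ L, or z·conj(w) ∈ L for all z, w ∈ L. Then there exist a positive integer r and an element ζ ∈ ℂ with ζ ∉ ℝ such that: ζ² + b·ζ + c = 0 for some b, c ∈ ℤ (so ζ is a quadratic integer and |ζ|² = c); r divides c; and L is the ℤ-span of the two elements (r : ℂ) and ζ. In particular, |z|² ∈ ℤ for every z ∈ L, i.e. L is integer-normed. -/

import Mathlib

open Complex

/-- A lattice in `ℂ` stable under `σ₂(z,w) = z̄w` or under `σ₃(z,w) = zw̄` is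
generated by a positive integer `r` and a quadratic integer `ζ` with `r ∣ |ζ|²`;
in particular it is integer-normed. -/
theorem stmt10 (e₁ e₂ : ℂ) (hli : LinearIndependent ℝ ![e₁, e₂])
    (L : Set ℂ) (hL : L = {z : ℂ | ∃ a b : ℤ, z = (a : ℂ) * e₁ + (b : ℂ) * e₂})
    (hstab : (∀ z ∈ L, ∀ w ∈ L, (starRingEnd ℂ) z * w ∈ L) ∨
             (∀ z ∈ L, ∀ w ∈ L, z * (starRingEnd ℂ) w ∈ L)) :
    ∃ (r : ℤ) (ζ : ℂ) (b c : ℤ), 0 < r ∧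
      ζ ∉ Set.range ((↑) : ℝ → ℂ) ∧
      ζ ^ 2 + (b : ℂ) * ζ + (c : ℂ) = 0 ∧
      Complex.normSq ζ = (c : ℝ) ∧
      r ∣ c ∧
      L = {z : ℂ | ∃ a b' : ℤ, z = (a : ℂ) * (r : ℂ) + (b' : ℂ) * ζ} ∧
      ∀ z ∈ L, ∃ nz : ℤ, Complex.normSq z = (nz : ℝ) := by
  have hmem : ∀ z : ℂ, z ∈ L ↔ ∃ a b : ℤ, z = (a:ℂ)*e₁ + (b:ℂ)*e₂ := by
    intro z; rw [hL]; exact Iff.rfl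
  have hpair : ∀ s t : ℝ, s • e₁ + t • e₂ = 0 → s = 0 ∧ t = 0 :=
    fun s t h => LinearIndependent.pair_iff.mp hli s t h
  have he₁ : e₁ ∈ L := (hmem e₁).mpr ⟨1, 0, by push_cast; ring⟩
  have he₂ : e₂ ∈ L := (hmem e₂).mpr ⟨0, 1, by push_cast; ring⟩
  have he₁0 : e₁ ≠ 0 := by simpa using hli.ne_zero 0
  have hσ : ∀ z ∈ L, ∀ w ∈ L, (starRingEnd ℂ) z * w ∈ L := by
    rcases hstab with h | h
    · exact h
    · intro z hz w hw; rw [mul_comm]; exact h w hw z hz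
  have hcomb : ∀ (m n : ℤ) (z w : ℂ), z ∈ L → w ∈ L → (m:ℂ)*z + (n:ℂ)*w ∈ L := by
    intro m n z w hz hw
    obtain ⟨a₁, b₁, h₁⟩ := (hmem z).mp hz
    obtain ⟨a₂, b₂, h₂⟩ := (hmem w).mp hw
    exact (hmem _).mpr ⟨m*a₁+n*a₂, m*b₁+n*b₂, by rw [h₁, h₂]; push_cast; ring⟩
  -- real elements of L are integers
  have hreal : ∀ x : ℝ, (x:ℂ) ∈ L → ∃ a : ℤ, x = (a:ℝ) := by
    intro x hx
    have h := hσ _ hx _ he₁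
    rw [Complex.conj_ofReal] at h
    obtain ⟨a, b, hab⟩ := (hmem _).mp h
    have hz : (x - (a:ℝ)) • e₁ + (-(b:ℝ)) • e₂ = 0 := by
      simp only [Complex.real_smul]
      push_cast
      linear_combination hab
    obtain ⟨h1, -⟩ := hpair _ _ hz
    exact ⟨a, by linarith⟩
  -- the imaginary parts satisfy an integer relation
  have h1 := hσ _ he₁ _ he₁
  rw [← Complex.normSq_eq_conj_mul_self] at h1
  obtain ⟨a, b, hab⟩ := (hmem _).mp h1
  have him : (a:ℝ) * e₁.im + (b:ℝ) * e₂.im = 0 := by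
    have h := congrArg Complex.im hab
    simp [Complex.add_im, Complex.mul_im] at h
    linarith
  have hab0 : ¬(a = 0 ∧ b = 0) := by
    rintro ⟨rfl, rfl⟩
    norm_num at hab
    exact he₁0 hab
  set gz : ℤ := (Int.gcd a b : ℤ) with hgz
  have hgz0 : gz ≠ 0 := by
    simp only [hgz, ne_eq, Int.natCast_eq_zero]
    rw [Int.gcd_eq_zero_iff]
    exact hab0
  obtain ⟨n', hn'⟩ : gz ∣ a := Int.gcd_dvd_left a b
  obtain ⟨m, hm⟩ : gz ∣ b := Int.gcd_dvd_right a b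
  set A : ℤ := Int.gcdA a b with hA
  set B : ℤ := Int.gcdB a b with hB
  have hbez : n' * A + m * B = 1 := by
    have h := Int.gcd_eq_gcd_ab a b
    rw [← hgz, ← hA, ← hB, hn', hm] at h
    have h2 : gz * (n' * A + m * B) = gz * 1 := by ring_nf; linear_combination -h
    exact mul_left_cancel₀ hgz0 h2
  have hbezR : (n':ℝ) * (A:ℝ) + (m:ℝ) * (B:ℝ) = 1 := by exact_mod_cast congrArg (Int.cast : ℤ → ℝ) hbez
  have hrel : (n':ℝ) * e₁.im + (m:ℝ) * e₂.im = 0 := by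
    have hgzR : (gz:ℝ) ≠ 0 := Int.cast_ne_zero.mpr hgz0
    apply mul_left_cancel₀ hgzR
    rw [hn', hm] at him
    push_cast at him ⊢
    linear_combination him
  set t : ℝ := (B:ℝ) * e₁.im - (A:ℝ) * e₂.im with htdef
  have hα : e₁.im = (m:ℝ) * t := by
    rw [htdef]; linear_combination (A:ℝ) * hrel - e₁.im * hbezR
  have hβ : e₂.im = (-n' : ℝ) * t := by
    rw [htdef]; linear_combination (B:ℝ) * hrel - e₂.im * hbezR
  set ζ : ℂ := (B:ℂ) * e₁ - (A:ℂ) * e₂ with hζdef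
  have hζL : ζ ∈ L := (hmem _).mpr ⟨B, -A, by push_cast; ring⟩
  have hζim : ζ.im = t := by
    simp [hζdef, htdef, Complex.sub_im, Complex.mul_im]
  have ht0 : t ≠ 0 := by
    intro h
    have hα0 : e₁.im = 0 := by rw [hα, h, mul_zero]
    have hβ0 : e₂.im = 0 := by rw [hβ, h, mul_zero]
    have hco : e₂.re • e₁ + (-e₁.re) • e₂ = 0 := by
      simp only [Complex.real_smul]
      apply Complex.ext
      · simp [Complex.add_re, Complex.mul_re, hα0, hβ0]; ring
      · simp [Complex.add_im, Complex.mul_im, hα0, hβ0]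
    obtain ⟨h2, h3⟩ := hpair _ _ hco
    apply he₁0
    apply Complex.ext
    · simpa using h3
    · exact hα0
  have hζnr : ζ ∉ Set.range ((↑) : ℝ → ℂ) := by
    rintro ⟨x, hx⟩
    apply ht0
    rw [← hζim, ← hx, Complex.ofReal_im]
  -- the subgroup of real (integer) elements of L
  let H : AddSubgroup ℤ :=
    { carrier := {k : ℤ | ((k:ℤ):ℂ) ∈ L}
      zero_mem' := (hmem _).mpr ⟨0, 0, by push_cast; ring⟩
      add_mem' := by
        intro x y hx hy
        have h := hcomb 1 1 _ _ hx hy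
        push_cast at h ⊢
        simpa using h
      neg_mem' := by
        intro x hx
        have h := hcomb (-1) 0 _ _ hx hx
        push_cast at h ⊢
        simpa using h }
  obtain ⟨r₀, hH⟩ := Int.subgroup_cyclic H
  have hHmem : ∀ k : ℤ, (k:ℂ) ∈ L ↔ r₀ ∣ k := by
    intro k
    have h1 : ((k:ℤ):ℂ) ∈ L ↔ k ∈ H := Iff.rfl
    rw [h1, hH, AddSubgroup.mem_closure_singleton]
    constructor
    · rintro ⟨n, hn⟩; exact Dvd.intro_left n (by simpa [zsmul_eq_mul] using hn)
    · rintro ⟨n, hn⟩; exact ⟨n, by simp [zsmul_eq_mul, hn]; ring⟩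
  have hr₀0 : r₀ ≠ 0 := by
    obtain ⟨k, hk⟩ := hreal _ h1
    have hkL : ((k:ℤ):ℂ) ∈ L := by
      have h' := h1
      rw [hk] at h'
      exact_mod_cast h'
    have hk0 : k ≠ 0 := by
      intro h
      rw [h] at hk
      simp only [Int.cast_zero] at hk
      exact he₁0 (Complex.normSq_eq_zero.mp hk)
    intro h
    obtain ⟨n, hn⟩ := (hHmem k).mp hkL
    rw [h] at hn
    simp at hn
    exact hk0 hn
  set r : ℤ := |r₀| with hrdef
  have hrpos : 0 < r := abs_pos.mpr hr₀0
  have hrdvd : ∀ k : ℤ, (k:ℂ) ∈ L ↔ r ∣ k := by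
    intro k; rw [hHmem, hrdef]; exact (abs_dvd r₀ k).symm
  have hrL : ((r:ℤ):ℂ) ∈ L := (hrdvd r).mpr dvd_rfl
  -- Cayley–Hamilton for multiplication by conj ζ
  obtain ⟨a₁, b₁, hc₁⟩ := (hmem _).mp (hσ _ hζL _ he₁)
  obtain ⟨a₂, b₂, hc₂⟩ := (hmem _).mp (hσ _ hζL _ he₂)
  set w : ℂ := (starRingEnd ℂ) ζ with hw
  set T : ℤ := a₁ + b₂ with hT
  set D : ℤ := a₁ * b₂ - a₂ * b₁ with hD
  have hch : (w^2 - (T:ℂ)*w + (D:ℂ)) * e₁ = 0 := by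
    push_cast [hT, hD]
    linear_combination (w - (b₂:ℂ)) * hc₁ + (b₁:ℂ) * hc₂
  have hqw : w^2 - (T:ℂ)*w + (D:ℂ) = 0 := by
    rcases mul_eq_zero.mp hch with h | h
    · exact h
    · exact absurd h he₁0
  have hqζ : ζ^2 - (T:ℂ)*ζ + (D:ℂ) = 0 := by
    have h := congrArg (starRingEnd ℂ) hqw
    simpa [hw, map_sub, map_add, map_mul, map_pow, Complex.conj_conj, map_intCast] using h
  have hζw : ζ ≠ w := by
    intro h
    apply ht0
    rw [← hζim]
    exact Complex.conj_eq_iff_im.mp (by rw [← hw, ← h])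
  have hTval : (T:ℂ) = ζ + w := by
    have hfac : (ζ - w) * (ζ + w - (T:ℂ)) = 0 := by linear_combination hqζ - hqw
    rcases mul_eq_zero.mp hfac with h | h
    · exact absurd (sub_eq_zero.mp h) hζw
    · linear_combination -h
  have hDval : (D:ℂ) = ζ * w := by linear_combination hqζ + ζ * hTval
  have hnormζ : Complex.normSq ζ = (D:ℝ) := by
    have h := Complex.mul_conj ζ
    rw [← hw] at h
    have h2 : ((Complex.normSq ζ : ℝ):ℂ) = ((D:ℝ):ℂ) := by
      rw [← h, ← hDval]; push_cast; ring
    exact_mod_cast h2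
  have hDL : ((D:ℤ):ℂ) ∈ L := by
    have h := hσ _ hζL _ hζL
    rw [← hw] at h
    rwa [show w * ζ = ((D:ℤ):ℂ) from by rw [hDval]; ring] at h
  have hDdvd : r ∣ D := (hrdvd D).mp hDL
  refine ⟨r, ζ, -T, D, hrpos, hζnr, ?_, hnormζ, hDdvd, ?_, ?_⟩
  · push_cast
    linear_combination hqζ
  · ext z
    simp only [Set.mem_setOf_eq]
    constructor
    · intro hz
      obtain ⟨a', b', hz'⟩ := (hmem z).mp hz
      set k : ℤ := a' * m + b' * (-n') with hk
      have hsub : z - (k:ℂ) * ζ ∈ L := by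
        have h := hcomb 1 (-k) z ζ hz hζL
        have he : z - (k:ℂ)*ζ = ((1:ℤ):ℂ)*z + ((-k:ℤ):ℂ)*ζ := by push_cast; ring
        rwa [he]
      have hzim : z.im = (a':ℝ) * e₁.im + (b':ℝ) * e₂.im := by
        rw [hz']; simp [Complex.add_im, Complex.mul_im]
      have him0 : (z - (k:ℂ)*ζ).im = 0 := by
        simp only [Complex.sub_im, Complex.mul_im, Complex.intCast_re, Complex.intCast_im]
        rw [hzim, hζim, hα, hβ, hk]
        push_cast
        ring
      have hre : z - (k:ℂ)*ζ = (((z - (k:ℂ)*ζ).re : ℝ):ℂ) := by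
        apply Complex.ext
        · simp
        · simp [him0]
      obtain ⟨j, hj⟩ := hreal _ (hre ▸ hsub)
      have hjL : ((j:ℤ):ℂ) ∈ L := by
        have h' := hsub
        rw [hre, hj] at h'
        exact_mod_cast h'
      obtain ⟨s, hs⟩ := (hrdvd j).mp hjL
      refine ⟨s, k, ?_⟩
      have : z - (k:ℂ)*ζ = ((j:ℤ):ℂ) := by rw [hre, hj]; push_cast; ring
      rw [hs] at this
      push_cast at this ⊢
      linear_combination this
    · rintro ⟨a', b', rfl⟩
      exact hcomb a' b' _ _ hrL hζL
  · intro z hz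
    have h := hσ _ hz _ hz
    rw [← Complex.normSq_eq_conj_mul_self] at h
    exact hreal _ h
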